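/- The function φ(x) := (2x)^{−1/x}·Γ(1 − 1/x) is strictly decreasing on any interval [α_0, 2] with α_0 ∈ (1,2); more precisely, its derivative is bounded above by a negative constant depending only on α_0 on this interval. -/

import Mathlib

open Real

private lemma logGamma_diffAt {t : ℝ} (ht : 0 < t) :
    DifferentiableAt ℝ (fun s => Real.log (Real.Gamma s)) t := by
  refine DifferentiableAt.log (Real.differentiableAt_Gamma ?_) (Real.Gamma_pos_of_pos ht).ne'
  intro m
  have : (0:ℝ) ≤ m := Nat.cast_nonneg m
  nlinarith

private lemma psi_le_log {t : ℝ} (ht : 0 < t) :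
    deriv (fun s => Real.log (Real.Gamma s)) t ≤ Real.log t := by
  have h := Real.convexOn_log_Gamma.deriv_le_slope (Set.mem_Ioi.2 ht)
    (Set.mem_Ioi.2 (by linarith : (0:ℝ) < t + 1)) (by linarith)
    ((logGamma_diffAt ht).congr_of_eventuallyEq
      (Filter.Eventually.of_forall fun s => rfl))
  have hs : slope (Real.log ∘ Real.Gamma) t (t + 1) = Real.log t := by
    rw [slope_def_field]
    have : Real.Gamma (t + 1) = t * Real.Gamma t := Real.Gamma_add_one ht.ne'
    simp only [Function.comp_apply, this,
      Real.log_mul ht.ne' (Real.Gamma_pos_of_pos ht).ne']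
    ring
  calc deriv (fun s => Real.log (Real.Gamma s)) t
      = deriv (Real.log ∘ Real.Gamma) t := rfl
    _ ≤ slope (Real.log ∘ Real.Gamma) t (t + 1) := h
    _ = Real.log t := hs

private lemma one_le_Gamma {t : ℝ} (ht : 0 < t) (ht1 : t ≤ 1) : 1 ≤ Real.Gamma t := by
  rcases eq_or_lt_of_le ht1 with h | h
  · rw [h, Real.Gamma_one]
  have h2t : (0:ℝ) < 2 - t := by linarith
  have ha : (0:ℝ) < 1 / (2 - t) := div_pos one_pos h2t
  have hb : (0:ℝ) ≤ (1 - t) / (2 - t) := by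
    apply div_nonneg <;> linarith
  have hab : 1 / (2 - t) + (1 - t) / (2 - t) = 1 := by
    field_simp
    ring
  have hc := Real.convexOn_log_Gamma.2 (Set.mem_Ioi.2 ht)
    (Set.mem_Ioi.2 (by norm_num : (0:ℝ) < 2)) ha.le hb hab
  have h1 : (1 / (2 - t)) • t + ((1 - t) / (2 - t)) • (2:ℝ) = 1 := by
    have : (2:ℝ) - t ≠ 0 := h2t.ne'
    rw [smul_eq_mul, smul_eq_mul, div_mul_eq_mul_div, div_mul_eq_mul_div, ← add_div,
      div_eq_one_iff_eq this]
    ring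
  rw [h1] at hc
  simp only [Function.comp_apply, Real.Gamma_one, Real.Gamma_two, Real.log_one,
    smul_eq_mul, mul_zero, add_zero] at hc
  have hlog : 0 ≤ Real.log (Real.Gamma t) := by
    by_contra hneg
    push_neg at hneg
    nlinarith
  exact (Real.log_nonneg_iff (Real.Gamma_pos_of_pos ht)).1 hlog

/-- φ(x) = (2x)^{−1/x}Γ(1−1/x) is strictly decreasing on [α₀,2], with derivative
bounded above by a negative constant depending only on α₀. -/
theorem stmt_3 (α₀ : ℝ) (hα₀ : α₀ ∈ Set.Ioo (1:ℝ) 2) :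
    StrictAntiOn (fun x : ℝ => (2*x) ^ (-1/x) * Real.Gamma (1 - 1/x)) (Set.Icc α₀ 2) ∧
    ∃ c : ℝ, 0 < c ∧ ∀ x ∈ Set.Icc α₀ 2,
      deriv (fun x : ℝ => (2*x) ^ (-1/x) * Real.Gamma (1 - 1/x)) x ≤ -c := by
  obtain ⟨hα1, hα2⟩ := hα₀
  set φ : ℝ → ℝ := fun x : ℝ => (2*x) ^ (-1/x) * Real.Gamma (1 - 1/x) with hφ
  set g : ℝ → ℝ := fun x : ℝ => (-1/x) * Real.log (2*x) + Real.log (Real.Gamma (1 - 1/x))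
    with hg
  set ψ : ℝ → ℝ := deriv (fun s => Real.log (Real.Gamma s)) with hψ
  -- equality φ = exp ∘ g on Ioi 1
  have hfeq : ∀ y ∈ Set.Ioi (1:ℝ), φ y = Real.exp (g y) := by
    intro y hy
    have hy1 : (1:ℝ) < y := hy
    have hy0 : 0 < y := by linarith
    have h2y : (0:ℝ) < 2 * y := by linarith
    have ht : 0 < 1 - 1/y := by
      rw [sub_pos, div_lt_one hy0]; exact hy1
    simp only [hφ, hg, Real.exp_add, Real.rpow_def_of_pos h2y,
      Real.exp_log (Real.Gamma_pos_of_pos ht)]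
    ring_nf
  -- derivative facts at each point
  have key : ∀ x, 1 < x → x ≤ 2 →
      HasDerivAt φ (deriv φ x) x ∧ deriv φ x ≤ (Real.log 2 - 1) / 16 := by
    intro x hx1 hx2
    have hx0 : (0:ℝ) < x := by linarith
    have hxne : x ≠ 0 := hx0.ne'
    have h2x : (0:ℝ) < 2 * x := by linarith
    have ht : 0 < 1 - 1/x := by rw [sub_pos, div_lt_one hx0]; exact hx1
    -- HasDerivAt for g
    have h1 : HasDerivAt (fun y : ℝ => -1/y) ((x^2)⁻¹) x := by
      have : HasDerivAt (fun y : ℝ => -y⁻¹) (-(-(x^2)⁻¹)) x := (hasDerivAt_inv hxne).neg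
      simpa [neg_div, one_div] using this
    have h2 : HasDerivAt (fun y : ℝ => Real.log (2*y)) (x⁻¹) x := by
      have hlin : HasDerivAt (fun y : ℝ => 2*y) 2 x := by
        simpa using (hasDerivAt_id x).const_mul (2:ℝ)
      have := hlin.log h2x.ne'
      convert this using 1
      field_simp
    have h12 : HasDerivAt (fun y : ℝ => (-1/y) * Real.log (2*y))
        ((x^2)⁻¹ * Real.log (2*x) + (-1/x) * x⁻¹) x := h1.mul h2
    have h3 : HasDerivAt (fun y : ℝ => 1 - 1/y) ((x^2)⁻¹) x := by
      have := (hasDerivAt_inv hxne).const_sub 1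
      simpa [one_div] using this
    have h4 : HasDerivAt (fun s => Real.log (Real.Gamma s)) (ψ (1 - 1/x)) (1 - 1/x) :=
      (logGamma_diffAt ht).hasDerivAt
    have h34 : HasDerivAt (fun y : ℝ => Real.log (Real.Gamma (1 - 1/y)))
        (ψ (1 - 1/x) * (x^2)⁻¹) x := by have := h4.comp x h3; exact this
    have hgd : HasDerivAt g
        ((x^2)⁻¹ * Real.log (2*x) + (-1/x) * x⁻¹ + ψ (1 - 1/x) * (x^2)⁻¹) x := h12.add h34
    set G : ℝ := (x^2)⁻¹ * Real.log (2*x) + (-1/x) * x⁻¹ + ψ (1 - 1/x) * (x^2)⁻¹ with hG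
    have hexp : HasDerivAt (fun y => Real.exp (g y)) (Real.exp (g x) * G) x := hgd.exp
    have hφx : HasDerivAt φ (Real.exp (g x) * G) x := by
      apply hexp.congr_of_eventuallyEq
      filter_upwards [Ioi_mem_nhds hx1] with y hy
      exact hfeq y hy
    have hderiv : deriv φ x = Real.exp (g x) * G := hφx.deriv
    -- bound G
    have hψb : ψ (1 - 1/x) ≤ Real.log (1 - 1/x) := psi_le_log ht
    have hGb : G ≤ (Real.log 2 - 1) / 4 := by
      have hx2sq : (0:ℝ) < x^2 := by positivity
      have hcomb : G = (Real.log (2*x) - 1 + ψ (1 - 1/x)) / x^2 := by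
        rw [hG]; field_simp; ring
      have hstep : Real.log (2*x) - 1 + ψ (1 - 1/x) ≤ Real.log 2 - 1 := by
        have : Real.log (2*x) + Real.log (1 - 1/x) = Real.log (2*x - 2) := by
          rw [← Real.log_mul h2x.ne' ht.ne']
          congr 1
          field_simp
        have h2x2 : Real.log (2*x - 2) ≤ Real.log 2 := by
          apply Real.log_le_log (by linarith)
          linarith
        linarith
      rw [hcomb]
      have hnum : Real.log (2*x) - 1 + ψ (1 - 1/x) ≤ 0 := by
        have : Real.log 2 - 1 ≤ 0 := by
          have := Real.log_two_lt_d9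
          linarith
        linarith
      have hxsq4 : x^2 ≤ 4 := by nlinarith
      calc (Real.log (2*x) - 1 + ψ (1 - 1/x)) / x^2
          ≤ (Real.log 2 - 1) / x^2 := by gcongr
        _ ≤ (Real.log 2 - 1) / 4 := by
            rw [div_le_div_iff₀ hx2sq (by norm_num)]
            have hneg : Real.log 2 - 1 ≤ 0 := by
              have := Real.log_two_lt_d9; linarith
            nlinarith
    -- lower bound exp (g x) = φ x ≥ 1/4
    have hφlb : (1:ℝ)/4 ≤ Real.exp (g x) := by
      rw [← hfeq x hx1]
      have hb1 : (1:ℝ) ≤ 2*x := by linarith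
      have hrp : (2*x) ^ (-(1:ℝ)) ≤ (2*x) ^ (-1/x) := by
        apply Real.rpow_le_rpow_of_exponent_le hb1
        rw [neg_div, neg_le_neg_iff, div_le_one hx0]
        exact hx1.le
      have hrpv : (2*x) ^ (-(1:ℝ)) = (2*x)⁻¹ := by
        rw [Real.rpow_neg_one]
      have hrl : (1:ℝ)/4 ≤ (2*x) ^ (-1/x) := by
        refine le_trans ?_ hrp
        rw [hrpv]
        calc (1:ℝ)/4 = 4⁻¹ := by norm_num
          _ ≤ (2*x)⁻¹ := by
              apply inv_anti₀ h2x
              linarith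
      have hg1 : (1:ℝ) ≤ Real.Gamma (1 - 1/x) := one_le_Gamma ht (by
        have : 0 < 1/x := by positivity
        linarith)
      have hrp0 : (0:ℝ) ≤ (2*x) ^ (-1/x) := Real.rpow_nonneg h2x.le _
      calc (1:ℝ)/4 ≤ (2*x) ^ (-1/x) := hrl
        _ = (2*x) ^ (-1/x) * 1 := (mul_one _).symm
        _ ≤ (2*x) ^ (-1/x) * Real.Gamma (1 - 1/x) := by
            apply mul_le_mul_of_nonneg_left hg1 hrp0
    have hGneg : G ≤ 0 := by
      have h9 : Real.log 2 - 1 ≤ 0 := by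
        have := Real.log_two_lt_d9; linarith
      calc G ≤ (Real.log 2 - 1) / 4 := hGb
        _ ≤ 0 := by linarith
    constructor
    · rw [hderiv]; exact hφx
    · rw [hderiv]
      calc Real.exp (g x) * G ≤ (1/4) * G := by
            apply mul_le_mul_of_nonpos_right hφlb hGneg
        _ ≤ (1/4) * ((Real.log 2 - 1)/4) := by
            apply mul_le_mul_of_nonneg_left hGb (by norm_num)
        _ = (Real.log 2 - 1) / 16 := by ring
  have hc : (0:ℝ) < (1 - Real.log 2) / 16 := by
    have := Real.log_two_lt_d9; linarith
  constructor
  · apply StrictAntiOn.mono ?_ (le_refl _)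
    apply strictAntiOn_of_deriv_neg (convex_Icc α₀ 2)
    · intro x hx
      obtain ⟨hxa, hxb⟩ := hx
      exact ((key x (lt_of_lt_of_le hα1 hxa) hxb).1).continuousAt.continuousWithinAt
    · intro x hx
      rw [interior_Icc] at hx
      obtain ⟨hxa, hxb⟩ := hx
      have := (key x (lt_trans hα1 hxa) hxb.le).2
      have h2 : Real.log 2 - 1 < 0 := by
        have := Real.log_two_lt_d9; linarith
      calc deriv φ x ≤ (Real.log 2 - 1)/16 := this
        _ < 0 := by linarith
  · refine ⟨(1 - Real.log 2) / 16, hc, ?_⟩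
    intro x hx
    obtain ⟨hxa, hxb⟩ := hx
    have := (key x (lt_of_lt_of_le hα1 hxa) hxb).2
    linarith
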